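/- If a_1, …, a_m is a nontrivial cycle of T of length m (i.e., a_i ≠ 1 for all i) with a_min ≥ 19·2^58, then m ≥ 6586818670. That is, any nontrivial cycle of the Collatz map contains at least 6,586,818,670 odd numbers. -/

import Mathlib

lemma log2_bounds : |(81026204946914272618346609082102250801114907729 : ℝ) / 116896104058966015646750947554978314987992252416
    - Real.log 2| ≤ 1 / 2 ^ 70 := by
  have h := Real.abs_log_sub_add_sum_range_le (x := (1/2 : ℝ)) (by rw [abs_of_pos] <;> norm_num) 70
  have hs : (∑ i ∈ Finset.range 70, ((1:ℝ)/2) ^ (i+1) / (i+1)) =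
      (81026204946914272618346609082102250801114907729 : ℝ) / 116896104058966015646750947554978314987992252416 := by
    norm_num [Finset.sum_range_succ]
  have hl : Real.log (1 - 1/2 : ℝ) = -Real.log 2 := by
    rw [show (1 - 1/2 : ℝ) = 2⁻¹ by norm_num, Real.log_inv]
  rw [hs, hl] at h
  rw [abs_of_pos (by norm_num : (0:ℝ) < 1/2)] at h
  calc |(81026204946914272618346609082102250801114907729 : ℝ) / 116896104058966015646750947554978314987992252416 - Real.log 2|
      = |(81026204946914272618346609082102250801114907729 : ℝ) / 116896104058966015646750947554978314987992252416 + -Real.log 2| := by ring_nf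
    _ ≤ (1/2 : ℝ) ^ (70+1) / (1 - 1/2) := h
    _ ≤ 1 / 2 ^ 70 := by norm_num

lemma log32_bounds : |(41331314501128500969887193025721266583 : ℝ) / 101935564058702441251486424642465325600
    - (Real.log 3 - Real.log 2)| ≤ 3 / (2 * 3 ^ 47) := by
  have h := Real.abs_log_sub_add_sum_range_le (x := (1/3 : ℝ)) (by rw [abs_of_pos] <;> norm_num) 46
  have hs : (∑ i ∈ Finset.range 46, ((1:ℝ)/3) ^ (i+1) / (i+1)) =
      (41331314501128500969887193025721266583 : ℝ) / 101935564058702441251486424642465325600 := by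
    norm_num [Finset.sum_range_succ]
  have hl : Real.log (1 - 1/3 : ℝ) = Real.log 2 - Real.log 3 := by
    rw [show (1 - 1/3 : ℝ) = 2/3 by norm_num, Real.log_div (by norm_num) (by norm_num)]
  rw [hs, hl] at h
  rw [abs_of_pos (by norm_num : (0:ℝ) < 1/3)] at h
  calc |(41331314501128500969887193025721266583 : ℝ) / 101935564058702441251486424642465325600 - (Real.log 3 - Real.log 2)|
      = |(41331314501128500969887193025721266583 : ℝ) / 101935564058702441251486424642465325600 + (Real.log 2 - Real.log 3)| := by ring_nf
    _ ≤ (1/3 : ℝ) ^ (46+1) / (1 - 1/3) := h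
    _ ≤ 3 / (2 * 3 ^ 47) := by norm_num

lemma key1 : (9809721694 : ℝ) * Real.log 2 < 6189245291 * Real.log 3 := by
  obtain ⟨h2a, h2b⟩ := abs_le.mp log2_bounds
  obtain ⟨h3a, h3b⟩ := abs_le.mp log32_bounds
  nlinarith [h2a, h2b, h3a, h3b]

lemma key2 : (397573379 : ℝ) * Real.log 3 + 397573379 * (1 / (3 * (19 * 2 ^ 58))) < 630138897 * Real.log 2 := by
  obtain ⟨h2a, h2b⟩ := abs_le.mp log2_bounds
  obtain ⟨h3a, h3b⟩ := abs_le.mp log32_bounds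
  nlinarith [h2a, h2b, h3a, h3b]

/-- The Collatz odd-step map: `T x = (3x+1)/2^{v₂(3x+1)}`. -/
def T (x : ℕ) : ℕ := (3 * x + 1) / 2 ^ (padicValNat 2 (3 * x + 1))


set_option maxHeartbeats 1000000 in
theorem stmt_13 (m : ℕ) (hm : 1 ≤ m) (a : ℕ → ℕ)
    (hpos : ∀ i, 1 ≤ i → i ≤ m → 0 < a i)
    (hodd : ∀ i, 1 ≤ i → i ≤ m → Odd (a i))
    (hstep : ∀ i, 1 ≤ i → i < m → a (i + 1) = T (a i))
    (hloop : T (a m) = a 1)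
    (hnontriv : ∀ i, 1 ≤ i → i ≤ m → a i ≠ 1)
    (amin : ℕ)
    (hamin : amin = (Finset.Icc 1 m).inf' (Finset.nonempty_Icc.mpr hm) a)
    (hbig : 19 * 2 ^ 58 ≤ amin) :
    6586818670 ≤ m := by
  obtain ⟨n, rfl⟩ : ∃ n, m = n + 1 := ⟨m - 1, (Nat.succ_pred_eq_of_pos hm).symm⟩
  set b : ℕ → ℕ := fun i => a (i + 1) with hb
  have hbpos : ∀ i ∈ Finset.range (n + 1), 0 < b i := fun i hi =>
    hpos (i + 1) (by omega) (by simp at hi; omega)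
  set v : ℕ → ℕ := fun i => padicValNat 2 (3 * b i + 1) with hv
  have hTv : ∀ i, T (b i) * 2 ^ v i = 3 * b i + 1 := fun i =>
    Nat.div_mul_cancel (pow_padicValNat_dvd)
  set K : ℕ := ∑ i ∈ Finset.range (n + 1), v i with hK
  set P : ℕ := ∏ i ∈ Finset.range (n + 1), b i with hP
  have hPpos : 0 < P := Finset.prod_pos hbpos
  -- product of T over the cycle equals product of b
  have hcyc : ∏ i ∈ Finset.range (n + 1), T (b i) = P := by
    have e1 : ∏ i ∈ Finset.range (n + 1), T (b i) =
        (∏ i ∈ Finset.range n, T (b i)) * T (b n) := Finset.prod_range_succ _ _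
    have e2 : ∏ i ∈ Finset.range n, T (b i) = ∏ i ∈ Finset.range n, b (i + 1) :=
      Finset.prod_congr rfl fun i hi => by
        have hi' : i < n := Finset.mem_range.mp hi
        exact (hstep (i + 1) (by omega) (by omega)).symm
    have e3 : P = (∏ i ∈ Finset.range n, b (i + 1)) * b 0 := Finset.prod_range_succ' _ _
    have e4 : T (b n) = b 0 := hloop
    rw [e1, e2, e3, e4]
  -- the fundamental product identity
  have hprod : ∏ i ∈ Finset.range (n + 1), (3 * b i + 1) = P * 2 ^ K := by
    calc ∏ i ∈ Finset.range (n + 1), (3 * b i + 1)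
        = ∏ i ∈ Finset.range (n + 1), (T (b i) * 2 ^ v i) :=
          Finset.prod_congr rfl fun i _ => (hTv i).symm
      _ = (∏ i ∈ Finset.range (n + 1), T (b i)) * ∏ i ∈ Finset.range (n + 1), 2 ^ v i :=
          Finset.prod_mul_distrib
      _ = P * 2 ^ K := by rw [hcyc, Finset.prod_pow_eq_pow_sum]
  -- lower bound : 3 ^ m < 2 ^ K
  have hlow : 3 ^ (n + 1) < 2 ^ K := by
    have h1 : ∏ i ∈ Finset.range (n + 1), (3 * b i) <
        ∏ i ∈ Finset.range (n + 1), (3 * b i + 1) :=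
      Finset.prod_lt_prod_of_nonempty (fun i hi => by have := hbpos i hi; omega)
        (fun i _ => by omega) Finset.nonempty_range_add_one
    have h2 : ∏ i ∈ Finset.range (n + 1), (3 * b i) = 3 ^ (n + 1) * P := by
      rw [Finset.prod_mul_distrib, Finset.prod_const, Finset.card_range]
    rw [h2, hprod] at h1
    have h3 : 3 ^ (n + 1) * P < 2 ^ K * P := by
      calc 3 ^ (n + 1) * P < P * 2 ^ K := h1
        _ = 2 ^ K * P := Nat.mul_comm _ _
    exact Nat.lt_of_mul_lt_mul_right h3
  -- upper bound : amin ^ m * 2 ^ K ≤ (3 * amin + 1) ^ m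
  have hAle : ∀ i ∈ Finset.range (n + 1), amin ≤ b i := fun i hi => by
    rw [hamin]
    exact Finset.inf'_le a (Finset.mem_Icc.mpr ⟨by omega, by simp at hi; omega⟩)
  have hup : amin ^ (n + 1) * 2 ^ K ≤ (3 * amin + 1) ^ (n + 1) := by
    have h1 : ∏ i ∈ Finset.range (n + 1), (amin * (3 * b i + 1)) ≤
        ∏ i ∈ Finset.range (n + 1), ((3 * amin + 1) * b i) :=
      Finset.prod_le_prod (fun i _ => Nat.zero_le _) (fun i hi => by
        have := hAle i hi; nlinarith)
    have h2 : ∏ i ∈ Finset.range (n + 1), (amin * (3 * b i + 1)) =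
        amin ^ (n + 1) * (P * 2 ^ K) := by
      rw [Finset.prod_mul_distrib, Finset.prod_const, Finset.card_range, hprod]
    have h3 : ∏ i ∈ Finset.range (n + 1), ((3 * amin + 1) * b i) =
        (3 * amin + 1) ^ (n + 1) * P := by
      rw [Finset.prod_mul_distrib, Finset.prod_const, Finset.card_range]
    rw [h2, h3] at h1
    have h4 : amin ^ (n + 1) * (P * 2 ^ K) = (amin ^ (n + 1) * 2 ^ K) * P := by ring
    rw [h4] at h1
    exact Nat.le_of_mul_le_mul_right h1 hPpos
  -- move to the reals
  set M : ℕ := n + 1 with hM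
  have hApos : 0 < amin := by omega
  have hRlow : ((3 : ℝ)) ^ M < 2 ^ K := by exact_mod_cast hlow
  have hRup : ((amin : ℝ)) ^ M * 2 ^ K ≤ ((3 * amin + 1 : ℕ) : ℝ) ^ M := by exact_mod_cast hup
  have hlog1 : (M : ℝ) * Real.log 3 < K * Real.log 2 := by
    have := Real.log_lt_log (by positivity) hRlow
    rwa [Real.log_pow, Real.log_pow] at this
  have hAposR : (0 : ℝ) < (amin : ℝ) := by exact_mod_cast hApos
  have hMpos : (0 : ℝ) < (M : ℝ) := by positivity
  have hlog2 : (K : ℝ) * Real.log 2 ≤ M * Real.log 3 + M * (1 / (3 * (19 * 2 ^ 58))) := by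
    have hlogup : Real.log (((amin : ℝ)) ^ M * 2 ^ K) ≤ Real.log (((3 * amin + 1 : ℕ) : ℝ) ^ M) :=
      Real.log_le_log (by positivity) hRup
    rw [Real.log_mul (by positivity) (by positivity), Real.log_pow, Real.log_pow,
      Real.log_pow] at hlogup
    have hsplit : Real.log ((3 * amin + 1 : ℕ) : ℝ) ≤
        Real.log amin + Real.log 3 + 1 / (3 * (amin : ℝ)) := by
      have hx : ((3 * amin + 1 : ℕ) : ℝ) = 3 * (amin : ℝ) + 1 := by push_cast; ring
      have hq : Real.log ((3 * (amin:ℝ) + 1) / (3 * amin)) ≤ (3 * (amin:ℝ) + 1) / (3 * amin) - 1 :=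
        Real.log_le_sub_one_of_pos (by positivity)
      have hdiv : Real.log ((3 * (amin:ℝ) + 1) / (3 * amin)) =
          Real.log (3 * (amin:ℝ) + 1) - Real.log (3 * amin) := by
        rw [Real.log_div (by positivity) (by positivity)]
      have hrw : (3 * (amin:ℝ) + 1) / (3 * amin) - 1 = 1 / (3 * amin) := by
        field_simp
        ring
      have hlog3A : Real.log (3 * (amin:ℝ)) = Real.log 3 + Real.log amin := by
        rw [Real.log_mul (by norm_num) (by positivity)]
      rw [hdiv, hrw, hlog3A] at hq
      rw [hx]; linarith
    have hbnd : 1 / (3 * (amin : ℝ)) ≤ 1 / (3 * (19 * 2 ^ 58)) := by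
      apply one_div_le_one_div_of_le (by norm_num)
      have : ((19 * 2 ^ 58 : ℕ) : ℝ) ≤ (amin : ℝ) := by exact_mod_cast hbig
      push_cast at this ⊢
      linarith
    have hs' := mul_le_mul_of_nonneg_left hsplit hMpos.le
    have hb' := mul_le_mul_of_nonneg_left hbnd hMpos.le
    nlinarith [hlogup, hs', hb']
  -- combine into integer inequalities via the Farey pair
  have hlog2pos : (0 : ℝ) < Real.log 2 := Real.log_pos (by norm_num)
  have hi1 : 9809721694 * M < 6189245291 * K := by
    have h1 := mul_lt_mul_of_pos_left key1 hMpos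
    have h2 := mul_lt_mul_of_pos_left hlog1 (by norm_num : (0:ℝ) < 6189245291)
    have h3 : ((9809721694 : ℝ) * M) * Real.log 2 < ((6189245291 : ℝ) * K) * Real.log 2 := by
      nlinarith [h1, h2]
    have h4 : (9809721694 : ℝ) * M < 6189245291 * K :=
      lt_of_mul_lt_mul_right h3 hlog2pos.le
    exact_mod_cast h4
  have hi2 : 397573379 * K < 630138897 * M := by
    have h1 := mul_le_mul_of_nonneg_left hlog2 (by norm_num : (0:ℝ) ≤ 397573379)
    have h2 := mul_lt_mul_of_pos_left key2 hMpos
    have h3 : ((397573379 : ℝ) * K) * Real.log 2 < ((630138897 : ℝ) * M) * Real.log 2 := by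
      nlinarith [h1, h2]
    have h4 : (397573379 : ℝ) * K < 630138897 * M :=
      lt_of_mul_lt_mul_right h3 hlog2pos.le
    exact_mod_cast h4
  omega
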